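/- arXiv:2511.01239 — 4 statements merged into one kernel-verified Lean document; each statement's English description precedes it below -/
import Mathlib

section
/- Let G = (V,E) be a finite simple undirected graph on n ≥ 1 vertices with positive edge weights and unique shortest paths, and let p ∈ (0,1]. Choose a random subset L ⊆ V by including each vertex independently with probability p. Then with probability at least 1 − 1/n, the following holds simultaneously for all pairs of connected vertices u, v: if the unique shortest path π(u,v) has hop length at least ⌊(3 ln n)/p⌋, then at least one vertex of π(u,v) belongs to L. (Proposition 2.1.) -/
open scoped ENNReal

variable {V : Type*}

/-- The total weight of a walk: the sum of the weights of its edges (in `ℝ≥0∞`). -/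
noncomputable def walkWeight {G : SimpleGraph V} (wt : Sym2 V → NNReal)
    {u v : V} (p : G.Walk u v) : ℝ≥0∞ :=
  (p.edges.map (fun e => (wt e : ℝ≥0∞))).sum

/-- The weighted shortest-path distance: the infimum over all walks from `u` to `v`
of their total weight (in `ℝ≥0∞`, so it is `∞` if `u` and `v` are not connected). -/
noncomputable def wdist (G : SimpleGraph V) (wt : Sym2 V → NNReal) (u v : V) : ℝ≥0∞ :=
  ⨅ p : G.Walk u v, walkWeight wt p

/-- `G` has unique shortest paths: for every pair of connected vertices there is exactly
one walk of minimum total weight. -/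
def HasUniqueShortestPaths (G : SimpleGraph V) (wt : Sym2 V → NNReal) : Prop :=
  ∀ u v : V, G.Reachable u v →
    ∃! p : G.Walk u v, walkWeight wt p = wdist G wt u v


lemma walkWeight_append {G : SimpleGraph V} (wt : Sym2 V → NNReal) {u v w : V}
    (q : G.Walk u v) (r : G.Walk v w) :
    walkWeight wt (q.append r) = walkWeight wt q + walkWeight wt r := by
  simp [walkWeight, SimpleGraph.Walk.edges_append]

lemma exists_path_weight_le {G : SimpleGraph V} [DecidableEq V] (wt : Sym2 V → NNReal)
    {u v : V} (q : G.Walk u v) :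
    ∃ q' : G.Walk u v, q'.IsPath ∧ walkWeight wt q' ≤ walkWeight wt q := by
  induction q with
  | nil => exact ⟨.nil, SimpleGraph.Walk.IsPath.nil, le_rfl⟩
  | @cons a b c h q ih =>
    obtain ⟨q', hq', hle⟩ := ih
    have hcons : walkWeight wt q' ≤ walkWeight wt (q.cons h) := by
      refine hle.trans ?_
      simp only [walkWeight, SimpleGraph.Walk.edges_cons, List.map_cons, List.sum_cons]
      exact le_add_self
    by_cases hm : a ∈ q'.support
    · refine ⟨q'.dropUntil a hm, hq'.dropUntil hm, ?_⟩
      refine le_trans ?_ hcons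
      conv_rhs => rw [← q'.take_spec hm]
      rw [walkWeight_append]
      exact le_add_self
    · refine ⟨q'.cons h, hq'.cons hm, ?_⟩
      simp only [walkWeight, SimpleGraph.Walk.edges_cons, List.map_cons, List.sum_cons]
      exact add_le_add le_rfl hle

lemma shortest_isPath {G : SimpleGraph V} [DecidableEq V] {wt : Sym2 V → NNReal}
    (huniq : HasUniqueShortestPaths G wt) {u v : V} (q : G.Walk u v)
    (hq : walkWeight wt q = wdist G wt u v) : q.IsPath := by
  obtain ⟨q', hq', hle⟩ := exists_path_weight_le wt q
  have h1 : walkWeight wt q' = wdist G wt u v :=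
    le_antisymm (hle.trans hq.le) (iInf_le _ q')
  obtain ⟨r, _, hun⟩ := huniq u v ⟨q⟩
  have e1 := hun q hq
  have e2 := hun q' h1
  rw [e1, ← e2]
  exact hq'

lemma measure_allFalse [Fintype V] (a : NNReal) (ha : a ≤ 1) (S : Finset V) :
    (MeasureTheory.Measure.pi fun _ : V => (PMF.bernoulli a ha).toMeasure)
      {ω : V → Bool | ∀ w ∈ S, ω w = false} = (1 - (a : ℝ≥0∞)) ^ S.card := by
  classical
  have hset : {ω : V → Bool | ∀ w ∈ S, ω w = false}
      = Set.pi Set.univ (fun w => if w ∈ S then ({false} : Set Bool) else Set.univ) := by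
    ext ω
    simp only [Set.mem_setOf_eq, Set.mem_pi, Set.mem_univ, true_implies]
    constructor
    · intro h w
      by_cases hw : w ∈ S <;> simp [hw, h w]
    · intro h w hw
      have := h w
      simpa [hw] using this
  rw [hset, MeasureTheory.Measure.pi_pi]
  have hb : (PMF.bernoulli a ha).toMeasure {false} = 1 - (a : ℝ≥0∞) := by
    rw [PMF.toMeasure_apply_singleton _ _ (measurableSet_singleton _)]
    simp [PMF.bernoulli_apply, ENNReal.coe_sub]
  calc (∏ w : V, (PMF.bernoulli a ha).toMeasure
          (if w ∈ S then ({false} : Set Bool) else Set.univ))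
      = ∏ w : V, (if w ∈ S then (1 - (a : ℝ≥0∞)) else 1) := by
        refine Finset.prod_congr rfl fun w _ => ?_
        split_ifs
        · exact hb
        · exact MeasureTheory.measure_univ
    _ = (1 - (a : ℝ≥0∞)) ^ S.card := by
        rw [Finset.prod_ite_mem, Finset.univ_inter, Finset.prod_const]

lemma pow_bound (n : ℕ) (hn : 1 ≤ n) (p : ℝ) (hp0 : 0 < p) (hp1 : p ≤ 1)
    (m : ℕ) (hm : ⌊(3 * Real.log n) / p⌋₊ + 1 ≤ m) :
    (1 - ENNReal.ofReal p) ^ m ≤ ((n : ℝ≥0∞))⁻¹ ^ 3 := by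
  have hn0 : (0 : ℝ) < n := by exact_mod_cast hn
  have h0 : (0 : ℝ) ≤ 1 - p := by linarith
  have hx : (3 * Real.log n) / p < m := by
    calc (3 * Real.log n) / p < ⌊(3 * Real.log n) / p⌋₊ + 1 := Nat.lt_floor_add_one _
    _ ≤ m := by exact_mod_cast hm
  have hpm : 3 * Real.log n ≤ p * m := by
    rw [div_lt_iff₀ hp0] at hx
    nlinarith
  have hreal : (1 - p) ^ m ≤ ((n : ℝ)⁻¹) ^ 3 := by
    have h1 : (1 - p) ^ m ≤ Real.exp (-p) ^ m := by
      refine pow_le_pow_left₀ h0 ?_ m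
      linarith [Real.add_one_le_exp (-p)]
    have h2 : Real.exp (-p) ^ m = Real.exp (-(p * m)) := by
      rw [← Real.exp_nat_mul]
      ring_nf
    have h3 : Real.exp (-(p * m)) ≤ Real.exp (-(3 * Real.log n)) := by
      apply Real.exp_le_exp.mpr
      linarith
    have h4 : Real.exp (-(3 * Real.log n)) = ((n : ℝ)⁻¹) ^ 3 := by
      have : -(3 * Real.log n) = (3 : ℕ) * (-Real.log n) := by push_cast; ring
      rw [this, Real.exp_nat_mul, Real.exp_neg, Real.exp_log hn0]
    calc (1 - p) ^ m ≤ Real.exp (-p) ^ m := h1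
      _ = Real.exp (-(p * m)) := h2
      _ ≤ Real.exp (-(3 * Real.log n)) := h3
      _ = ((n : ℝ)⁻¹) ^ 3 := h4
  have hl : (1 - ENNReal.ofReal p) ^ m = ENNReal.ofReal ((1 - p) ^ m) := by
    rw [ENNReal.ofReal_pow h0, ENNReal.ofReal_sub _ hp0.le, ENNReal.ofReal_one]
  have hr : ((n : ℝ≥0∞))⁻¹ ^ 3 = ENNReal.ofReal (((n : ℝ)⁻¹) ^ 3) := by
    rw [ENNReal.ofReal_pow (by positivity), ENNReal.ofReal_inv_of_pos hn0,
      ENNReal.ofReal_natCast]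
  rw [hl, hr]
  exact ENNReal.ofReal_le_ofReal hreal

theorem stmt2 [Fintype V] [DecidableEq V] (G : SimpleGraph V) (wt : Sym2 V → NNReal)
    (hwt : ∀ e ∈ G.edgeSet, 0 < wt e)
    (n : ℕ) (hn : 1 ≤ n) (hcard : Fintype.card V = n)
    (huniq : HasUniqueShortestPaths G wt)
    (p : ℝ) (hp0 : 0 < p) (hp1 : p ≤ 1) :
    1 - 1 / (n : ℝ≥0∞) ≤
      (MeasureTheory.Measure.pi fun _ : V =>
          (PMF.bernoulli (Real.toNNReal p) (Real.toNNReal_le_one.mpr hp1)).toMeasure)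
        {ω : V → Bool | ∀ (u v : V) (q : G.Walk u v),
          walkWeight wt q = wdist G wt u v →
          ⌊(3 * Real.log n) / p⌋₊ ≤ q.length →
          ∃ w ∈ q.support, ω w = true} := by
  classical
  set a : NNReal := Real.toNNReal p with ha
  set μ := MeasureTheory.Measure.pi fun _ : V =>
      (PMF.bernoulli a (Real.toNNReal_le_one.mpr hp1)).toMeasure with hμ
  set k : ℕ := ⌊(3 * Real.log n) / p⌋₊ with hk
  set E : Set (V → Bool) := {ω : V → Bool | ∀ (u v : V) (q : G.Walk u v),
      walkWeight wt q = wdist G wt u v → k ≤ q.length →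
      ∃ w ∈ q.support, ω w = true} with hE
  have hEmeas : MeasurableSet E := (Set.toFinite E).measurableSet
  -- the bad event for a pair
  set B : V × V → Set (V → Bool) := fun uv =>
    {ω : V → Bool | ∃ q : G.Walk uv.1 uv.2, walkWeight wt q = wdist G wt uv.1 uv.2 ∧
      k ≤ q.length ∧ ∀ w ∈ q.support, ω w = false} with hB
  have hsub : Eᶜ ⊆ ⋃ uv : V × V, B uv := by
    intro ω hω
    simp only [hE, Set.mem_compl_iff, Set.mem_setOf_eq, not_forall] at hω
    obtain ⟨u, v, q, hq, hlen, hno⟩ := hω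
    refine Set.mem_iUnion.mpr ⟨(u, v), q, hq, hlen, fun w hw => ?_⟩
    by_contra htrue
    exact hno ⟨w, hw, by simpa using htrue⟩
  have hbound : ∀ uv : V × V, μ (B uv) ≤ ((n : ℝ≥0∞))⁻¹ ^ 3 := by
    intro uv
    by_cases hex : ∃ q : G.Walk uv.1 uv.2,
        walkWeight wt q = wdist G wt uv.1 uv.2 ∧ k ≤ q.length
    · obtain ⟨q₀, hq₀, hlen₀⟩ := hex
      have hBsub : B uv ⊆ {ω : V → Bool | ∀ w ∈ q₀.support.toFinset, ω w = false} := by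
        intro ω hω
        obtain ⟨q, hq, _, hfalse⟩ := hω
        obtain ⟨r, _, hun⟩ := huniq uv.1 uv.2 ⟨q⟩
        have : q = q₀ := by rw [hun q hq, ← hun q₀ hq₀]
        intro w hw
        exact hfalse w (by simpa [this] using List.mem_toFinset.mp hw)
      have hpath : q₀.IsPath := shortest_isPath huniq q₀ hq₀
      have hcard : q₀.support.toFinset.card = q₀.length + 1 := by
        rw [List.toFinset_card_of_nodup hpath.support_nodup,
          SimpleGraph.Walk.length_support]
      calc μ (B uv) ≤ μ {ω : V → Bool | ∀ w ∈ q₀.support.toFinset, ω w = false} :=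
            MeasureTheory.measure_mono hBsub
        _ = (1 - (a : ℝ≥0∞)) ^ q₀.support.toFinset.card :=
            measure_allFalse a (Real.toNNReal_le_one.mpr hp1) _
        _ ≤ ((n : ℝ≥0∞))⁻¹ ^ 3 := by
            rw [hcard]
            exact pow_bound n hn p hp0 hp1 _ (by omega)
    · have : B uv = ∅ := by
        ext ω
        simp only [hB, Set.mem_setOf_eq, Set.mem_empty_iff_false, iff_false]
        rintro ⟨q, hq, hl, -⟩
        exact hex ⟨q, hq, hl⟩
      simp [this]
  have hcompl : μ Eᶜ ≤ 1 / (n : ℝ≥0∞) := by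
    have hn0 : ((n : ℝ≥0∞)) ≠ 0 := by exact_mod_cast Nat.pos_of_ne_zero (by omega) |>.ne'
    calc μ Eᶜ ≤ ∑' uv : V × V, μ (B uv) :=
          le_trans (MeasureTheory.measure_mono hsub) (MeasureTheory.measure_iUnion_le B)
      _ = ∑ uv : V × V, μ (B uv) := tsum_fintype _
      _ ≤ ∑ _uv : V × V, ((n : ℝ≥0∞))⁻¹ ^ 3 := Finset.sum_le_sum fun uv _ => hbound uv
      _ = ((n : ℝ≥0∞) * n) * ((n : ℝ≥0∞))⁻¹ ^ 3 := by
          rw [Finset.sum_const, Finset.card_univ, Fintype.card_prod, hcard]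
          simp only [nsmul_eq_mul, Nat.cast_mul]
      _ = 1 / (n : ℝ≥0∞) := by
          have hinv : (n : ℝ≥0∞) * (n : ℝ≥0∞)⁻¹ = 1 :=
            ENNReal.mul_inv_cancel hn0 (ENNReal.natCast_ne_top n)
          rw [one_div]
          calc ((n : ℝ≥0∞) * n) * ((n : ℝ≥0∞))⁻¹ ^ 3
              = ((n : ℝ≥0∞) * (n : ℝ≥0∞)⁻¹) * ((n : ℝ≥0∞) * (n : ℝ≥0∞)⁻¹) * (n : ℝ≥0∞)⁻¹ := by
                ring
            _ = (n : ℝ≥0∞)⁻¹ := by rw [hinv]; ring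
  have hprob : μ E = 1 - μ Eᶜ := by
    rw [← MeasureTheory.prob_compl_eq_one_sub hEmeas.compl, compl_compl]
  calc 1 - 1 / (n : ℝ≥0∞) ≤ 1 - μ Eᶜ := tsub_le_tsub_left hcompl 1
    _ = μ E := hprob.symm
end

section
/- Let G = (V,E) be a finite simple undirected graph with positive edge weights and unique shortest paths, let s, v, t be vertices pairwise connected in G, and let f ∈ E. If f lies on the unique shortest path π(s,t) and f lies on the unique shortest path π(v,t), then f does not lie on the unique shortest path π(s,v). (Case 1 in the proof of Lemma 3.1.) -/
open scoped ENNReal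

variable {V : Type*}

namespace StmtAux

variable {G : SimpleGraph V} {wt : Sym2 V → NNReal}

lemma walkWeight_cons {u c v : V} (h : G.Adj u c) (p : G.Walk c v) :
    walkWeight wt (SimpleGraph.Walk.cons h p) = (wt s(u, c) : ℝ≥0∞) + walkWeight wt p := by
  simp [walkWeight]

lemma walkWeight_append {u v w : V} (p : G.Walk u v) (q : G.Walk v w) :
    walkWeight wt (p.append q) = walkWeight wt p + walkWeight wt q := by
  simp [walkWeight, SimpleGraph.Walk.edges_append]

lemma walkWeight_reverse {u v : V} (p : G.Walk u v) :
    walkWeight wt p.reverse = walkWeight wt p := by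
  simp [walkWeight, SimpleGraph.Walk.edges_reverse, List.sum_reverse]

lemma wdist_le {u v : V} (p : G.Walk u v) : wdist G wt u v ≤ walkWeight wt p :=
  iInf_le _ p

lemma walkWeight_ne_top {u v : V} (p : G.Walk u v) : walkWeight wt p ≠ ⊤ := by
  unfold walkWeight
  induction p.edges with
  | nil => simp
  | cons a l ih => simp only [List.map_cons, List.sum_cons]; exact ENNReal.add_ne_top.2 ⟨ENNReal.coe_ne_top, ih⟩

lemma wdist_comm (u v : V) : wdist G wt u v = wdist G wt v u := by
  have h : ∀ a b : V, wdist G wt a b ≤ wdist G wt b a := by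
    intro a b
    refine le_iInf fun p => ?_
    calc wdist G wt a b ≤ walkWeight wt p.reverse := wdist_le _
    _ = walkWeight wt p := walkWeight_reverse p
  exact le_antisymm (h u v) (h v u)

lemma wdist_triangle (u v w : V) :
    wdist G wt u w ≤ wdist G wt u v + wdist G wt v w := by
  simp only [wdist]
  rw [ENNReal.iInf_add]
  refine le_iInf fun p => ?_
  rw [ENNReal.add_iInf]
  refine le_iInf fun q => ?_
  refine le_trans (iInf_le _ (p.append q)) (le_of_eq (walkWeight_append p q))

lemma wdist_le_edge {x y : V} (h : G.Adj x y) : wdist G wt x y ≤ (wt s(x, y) : ℝ≥0∞) := by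
  calc wdist G wt x y ≤ walkWeight wt (SimpleGraph.Walk.cons h SimpleGraph.Walk.nil) := wdist_le _
  _ = (wt s(x, y) : ℝ≥0∞) := by simp [walkWeight]

/-- split a walk at an edge of it -/
lemma split_at_edge {u v : V} (p : G.Walk u v) {f : Sym2 V} (hf : f ∈ p.edges) :
    ∃ (x y : V) (h : G.Adj x y) (p₁ : G.Walk u x) (p₂ : G.Walk y v),
      f = s(x, y) ∧
      walkWeight wt p = walkWeight wt p₁ + (wt f : ℝ≥0∞) + walkWeight wt p₂ := by
  induction p with
  | nil => simp at hf
  | @cons a c d h q ih =>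
    rw [SimpleGraph.Walk.edges_cons, List.mem_cons] at hf
    rcases hf with hf | hf
    · exact ⟨a, c, h, SimpleGraph.Walk.nil, q, hf, by
        simp [walkWeight_cons, walkWeight, ← hf]⟩
    · obtain ⟨x, y, hxy, p₁, p₂, hfe, hsum⟩ := ih hf
      refine ⟨x, y, hxy, SimpleGraph.Walk.cons h p₁, p₂, hfe, ?_⟩
      rw [walkWeight_cons, walkWeight_cons, hsum]
      ring

/-- decomposition of a shortest walk at one of its edges -/
lemma shortest_decomp {u v : V} (p : G.Walk u v) (hp : walkWeight wt p = wdist G wt u v)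
    {f : Sym2 V} (hf : f ∈ p.edges) :
    ∃ x y : V, G.Adj x y ∧ f = s(x, y) ∧
      wdist G wt u x ≠ ⊤ ∧ wdist G wt y v ≠ ⊤ ∧
      wdist G wt u v = wdist G wt u x + (wt f : ℝ≥0∞) + wdist G wt y v := by
  obtain ⟨x, y, hxy, p₁, p₂, hfe, hsum⟩ := split_at_edge p hf
  have h1 : wdist G wt u x ≤ walkWeight wt p₁ := wdist_le _
  have h2 : wdist G wt y v ≤ walkWeight wt p₂ := wdist_le _
  have hfin1 : wdist G wt u x ≠ ⊤ := fun h => walkWeight_ne_top p₁ (top_le_iff.1 (h ▸ h1))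
  have hfin2 : wdist G wt y v ≠ ⊤ := fun h => walkWeight_ne_top p₂ (top_le_iff.1 (h ▸ h2))
  refine ⟨x, y, hxy, hfe, hfin1, hfin2, le_antisymm ?_ ?_⟩
  · calc wdist G wt u v ≤ wdist G wt u x + wdist G wt x v := wdist_triangle u x v
    _ ≤ wdist G wt u x + (wdist G wt x y + wdist G wt y v) :=
        add_le_add_right (wdist_triangle x y v) _
    _ ≤ wdist G wt u x + ((wt f : ℝ≥0∞) + wdist G wt y v) := by
        refine add_le_add_right (add_le_add_left ?_ _) _
        rw [hfe]; exact wdist_le_edge hxy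
    _ = wdist G wt u x + (wt f : ℝ≥0∞) + wdist G wt y v := by ring
  · calc wdist G wt u x + (wt f : ℝ≥0∞) + wdist G wt y v
        ≤ walkWeight wt p₁ + (wt f : ℝ≥0∞) + walkWeight wt p₂ :=
          add_le_add (add_le_add_left h1 _) h2
    _ = walkWeight wt p := hsum.symm
    _ = wdist G wt u v := hp

/-- the "mid-vertex" distance equalities for a shortest-path decomposition -/
lemma mid {u v x y : V} (hadj : G.Adj x y) {w : ℝ≥0∞} (hwf : w = (wt s(x, y) : ℝ≥0∞))
    (hux : wdist G wt u x ≠ ⊤) (hyv : wdist G wt y v ≠ ⊤)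
    (hdec : wdist G wt u v = wdist G wt u x + w + wdist G wt y v) :
    wdist G wt u y = wdist G wt u x + w ∧ wdist G wt x v = w + wdist G wt y v := by
  have hxyle : wdist G wt x y ≤ w := hwf ▸ wdist_le_edge hadj
  constructor
  · refine le_antisymm ?_ ?_
    · calc wdist G wt u y ≤ wdist G wt u x + wdist G wt x y := wdist_triangle u x y
      _ ≤ wdist G wt u x + w := add_le_add_right hxyle _
    · have h : wdist G wt u x + w + wdist G wt y v ≤ wdist G wt u y + wdist G wt y v :=
        hdec ▸ wdist_triangle u y v
      exact (ENNReal.add_le_add_iff_right hyv).1 h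
  · refine le_antisymm ?_ ?_
    · calc wdist G wt x v ≤ wdist G wt x y + wdist G wt y v := wdist_triangle x y v
      _ ≤ w + wdist G wt y v := add_le_add_left hxyle _
    · have h : wdist G wt u x + (w + wdist G wt y v) ≤ wdist G wt u x + wdist G wt x v := by
        have := hdec ▸ wdist_triangle u x v
        calc wdist G wt u x + (w + wdist G wt y v)
            = wdist G wt u x + w + wdist G wt y v := by ring
        _ ≤ wdist G wt u x + wdist G wt x v := this
      exact (ENNReal.add_le_add_iff_left hux).1 h

end StmtAux

set_option maxHeartbeats 1000000 in
open StmtAux in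
theorem stmt6 [Fintype V] [DecidableEq V] (G : SimpleGraph V) (wt : Sym2 V → NNReal)
    (hwt : ∀ e ∈ G.edgeSet, 0 < wt e)
    (huniq : HasUniqueShortestPaths G wt)
    (s v t : V)
    (hst : G.Reachable s t) (hvt : G.Reachable v t) (hsv : G.Reachable s v)
    (f : Sym2 V) (hf : f ∈ G.edgeSet)
    (qst : G.Walk s t) (hqst : walkWeight wt qst = wdist G wt s t)
    (qvt : G.Walk v t) (hqvt : walkWeight wt qvt = wdist G wt v t)
    (qsv : G.Walk s v) (hqsv : walkWeight wt qsv = wdist G wt s v)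
    (hf1 : f ∈ qst.edges) (hf2 : f ∈ qvt.edges) :
    f ∉ qsv.edges := by
  intro hf3
  have hw0 : (wt f : ℝ≥0∞) ≠ 0 := by
    simp only [ne_eq, ENNReal.coe_eq_zero]
    exact (hwt f hf).ne'
  have hwtop : (wt f : ℝ≥0∞) ≠ ⊤ := ENNReal.coe_ne_top
  have hww0 : (wt f : ℝ≥0∞) + (wt f : ℝ≥0∞) ≠ 0 := by simp [hw0]
  obtain ⟨x, y, hadj, hfxy, hsx_fin, hyt_fin, hdst⟩ := shortest_decomp qst hqst hf1
  obtain ⟨x', y', hadj', hfxy', hvx_fin, hy't_fin, hdvt⟩ := shortest_decomp qvt hqvt hf2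
  obtain ⟨a, b, hadjab, hfab, hsa_fin, hbv_fin, hdsv⟩ := shortest_decomp qsv hqsv hf3
  have hwxy : (wt f : ℝ≥0∞) = (wt s(x, y) : ℝ≥0∞) := by rw [hfxy]
  have hwyx : (wt f : ℝ≥0∞) = (wt s(y, x) : ℝ≥0∞) := by rw [hfxy, Sym2.eq_swap]
  have hmid_st := mid (wt := wt) hadj hwxy hsx_fin hyt_fin hdst
  have hcase : (x' = x ∧ y' = y) ∨ (x' = y ∧ y' = x) := by
    have := hfxy'.symm.trans hfxy
    rw [Sym2.eq_iff] at this
    tauto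
  rcases hcase with ⟨hx', hy'⟩ | ⟨hx', hy'⟩
  · -- same orientation on qst and qvt; now case on qsv's orientation
    rw [hx'] at hvx_fin hdvt; rw [hy'] at hy't_fin hdvt
    have hmid_vt := mid (wt := wt) hadj hwxy hvx_fin hy't_fin hdvt
    have hcase2 : (a = x ∧ b = y) ∨ (a = y ∧ b = x) := by
      have := hfab.symm.trans hfxy
      rw [Sym2.eq_iff] at this
      tauto
    rcases hcase2 with ⟨ha, hb⟩ | ⟨ha, hb⟩
    · rw [ha] at hsa_fin hdsv; rw [hb] at hbv_fin hdsv
      have hmid_sv := mid (wt := wt) hadj hwxy hsa_fin hbv_fin hdsv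
      have h1 : wdist G wt x v = (wt f : ℝ≥0∞) + wdist G wt y v := hmid_sv.2
      have h2 : wdist G wt v y = wdist G wt v x + (wt f : ℝ≥0∞) := hmid_vt.1
      have key : wdist G wt x v = wdist G wt x v + ((wt f : ℝ≥0∞) + (wt f : ℝ≥0∞)) := by
        calc wdist G wt x v = (wt f : ℝ≥0∞) + wdist G wt y v := h1
        _ = (wt f : ℝ≥0∞) + wdist G wt v y := by rw [wdist_comm y v]
        _ = (wt f : ℝ≥0∞) + (wdist G wt v x + (wt f : ℝ≥0∞)) := by rw [h2]
        _ = wdist G wt v x + ((wt f : ℝ≥0∞) + (wt f : ℝ≥0∞)) := by ring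
        _ = wdist G wt x v + ((wt f : ℝ≥0∞) + (wt f : ℝ≥0∞)) := by rw [wdist_comm v x]
      have hfin : wdist G wt x v ≠ ⊤ := by rw [wdist_comm x v]; exact hvx_fin
      have h0 : (0 : ℝ≥0∞) = (wt f : ℝ≥0∞) + (wt f : ℝ≥0∞) :=
        (ENNReal.add_right_inj hfin).1 (by rw [add_zero]; exact key)
      exact hww0 h0.symm
    · rw [ha] at hsa_fin hdsv; rw [hb] at hbv_fin hdsv
      have hmid_sv := mid (wt := wt) hadj.symm hwyx hsa_fin hbv_fin hdsv
      have h1 : wdist G wt s x = wdist G wt s y + (wt f : ℝ≥0∞) := hmid_sv.1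
      have h2 : wdist G wt s y = wdist G wt s x + (wt f : ℝ≥0∞) := hmid_st.1
      have key : wdist G wt s x = wdist G wt s x + ((wt f : ℝ≥0∞) + (wt f : ℝ≥0∞)) := by
        calc wdist G wt s x = wdist G wt s y + (wt f : ℝ≥0∞) := h1
        _ = wdist G wt s x + (wt f : ℝ≥0∞) + (wt f : ℝ≥0∞) := by rw [h2]
        _ = wdist G wt s x + ((wt f : ℝ≥0∞) + (wt f : ℝ≥0∞)) := by ring
      have h0 : (0 : ℝ≥0∞) = (wt f : ℝ≥0∞) + (wt f : ℝ≥0∞) :=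
        (ENNReal.add_right_inj hsx_fin).1 (by rw [add_zero]; exact key)
      exact hww0 h0.symm
  · -- opposite orientations of f on qst and qvt: contradiction already
    rw [hx'] at hvx_fin hdvt; rw [hy'] at hy't_fin hdvt
    have hmid_vt := mid (wt := wt) hadj.symm hwyx hvx_fin hy't_fin hdvt
    have h1 : wdist G wt x t = (wt f : ℝ≥0∞) + wdist G wt y t := hmid_st.2
    have h2 : wdist G wt y t = (wt f : ℝ≥0∞) + wdist G wt x t := hmid_vt.2
    have hfin : wdist G wt x t ≠ ⊤ := by
      rw [h1]
      exact ENNReal.add_ne_top.2 ⟨hwtop, hyt_fin⟩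
    have key : wdist G wt x t = wdist G wt x t + ((wt f : ℝ≥0∞) + (wt f : ℝ≥0∞)) := by
      calc wdist G wt x t = (wt f : ℝ≥0∞) + wdist G wt y t := h1
      _ = (wt f : ℝ≥0∞) + ((wt f : ℝ≥0∞) + wdist G wt x t) := by rw [h2]
      _ = wdist G wt x t + ((wt f : ℝ≥0∞) + (wt f : ℝ≥0∞)) := by ring
    have h0 : (0 : ℝ≥0∞) = (wt f : ℝ≥0∞) + (wt f : ℝ≥0∞) :=
      (ENNReal.add_right_inj hfin).1 (by rw [add_zero]; exact key)
    exact hww0 h0.symm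
end

section
/- Let G = (V,E) be a finite simple undirected graph with positive edge weights and unique shortest paths, let s, v, t be vertices with d_G(v,t) ≤ d_G(v,s), and let f ∈ E be an edge such that s and v are connected in G − f and f does not lie on the unique shortest path π(v,t). Then d_{G−f}(s,t) + d_G(v,t) ≤ 3 · d_{G−f}(s,v). (Case 2 in the proof of Lemma 3.1.) -/
open scoped ENNReal

variable {V : Type*}

lemma walkWeight_transfer {G H : SimpleGraph V} (wt : Sym2 V → NNReal) {u v : V}
    (p : G.Walk u v) (hp : ∀ e ∈ p.edges, e ∈ H.edgeSet) :
    walkWeight wt (p.transfer H hp) = walkWeight wt p := by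
  simp [walkWeight, SimpleGraph.Walk.edges_transfer]

lemma wdist_le {G : SimpleGraph V} (wt : Sym2 V → NNReal) {u v : V} (p : G.Walk u v) :
    wdist G wt u v ≤ walkWeight wt p := iInf_le _ p

lemma wdist_symm (G : SimpleGraph V) (wt : Sym2 V → NNReal) (u v : V) :
    wdist G wt u v = wdist G wt v u := by
  have key : ∀ a b : V, wdist G wt a b ≤ wdist G wt b a := by
    intro a b
    refine le_iInf fun p => ?_
    refine le_trans (wdist_le wt p.reverse) ?_
    simp [walkWeight, SimpleGraph.Walk.edges_reverse, List.map_reverse, List.sum_reverse]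
  exact le_antisymm (key u v) (key v u)

lemma wdist_triangle (G : SimpleGraph V) (wt : Sym2 V → NNReal) (u v w : V) :
    wdist G wt u w ≤ wdist G wt u v + wdist G wt v w := by
  simp only [wdist]
  rw [ENNReal.iInf_add]
  refine le_iInf fun p => ?_
  rw [ENNReal.add_iInf]
  refine le_iInf fun q => ?_
  refine le_trans (wdist_le wt (p.append q)) ?_
  simp [walkWeight, SimpleGraph.Walk.edges_append]

lemma wdist_anti {G H : SimpleGraph V} (h : H ≤ G) (wt : Sym2 V → NNReal) (u v : V) :
    wdist G wt u v ≤ wdist H wt u v := by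
  refine le_iInf fun p => ?_
  have hp : ∀ e ∈ p.edges, e ∈ G.edgeSet := fun e he =>
    SimpleGraph.edgeSet_mono h (p.edges_subset_edgeSet he)
  refine le_trans (wdist_le wt (p.transfer G hp)) ?_
  rw [walkWeight_transfer]

theorem stmt7 [Fintype V] [DecidableEq V] (G : SimpleGraph V) (wt : Sym2 V → NNReal)
    (hwt : ∀ e ∈ G.edgeSet, 0 < wt e)
    (huniq : HasUniqueShortestPaths G wt)
    (s v t : V) (hvt : wdist G wt v t ≤ wdist G wt v s)
    (f : Sym2 V) (hf : f ∈ G.edgeSet)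
    (hconn : (G.deleteEdges {f}).Reachable s v)
    (qvt : G.Walk v t) (hqvt : walkWeight wt qvt = wdist G wt v t)
    (hfq : f ∉ qvt.edges) :
    wdist (G.deleteEdges {f}) wt s t + wdist G wt v t ≤
      3 * wdist (G.deleteEdges {f}) wt s v := by
  set H := G.deleteEdges {f}
  -- `qvt` avoids `f`, so it transfers to `H = G - f`
  have hq : ∀ e ∈ qvt.edges, e ∈ H.edgeSet := by
    intro e he
    rw [SimpleGraph.edgeSet_deleteEdges]
    exact ⟨qvt.edges_subset_edgeSet he, by rintro rfl; exact hfq he⟩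
  have h1 : wdist H wt v t ≤ wdist G wt v t := by
    refine le_trans (wdist_le wt (qvt.transfer H hq)) ?_
    rw [walkWeight_transfer, hqvt]
  -- d_G(v,t) ≤ d_G(v,s) ≤ d_H(v,s) = d_H(s,v)
  have h2 : wdist G wt v t ≤ wdist H wt s v := by
    refine hvt.trans ?_
    refine (wdist_anti (H := H) (SimpleGraph.deleteEdges_le {f}) wt v s).trans ?_
    rw [wdist_symm]
  -- triangle inequality through v
  have h3 : wdist H wt s t ≤ wdist H wt s v + wdist G wt v t :=
    (wdist_triangle H wt s v t).trans (add_le_add_right h1 _)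
  calc wdist H wt s t + wdist G wt v t
      ≤ (wdist H wt s v + wdist G wt v t) + wdist G wt v t := add_le_add_left h3 _
    _ ≤ wdist H wt s v + wdist H wt s v + wdist H wt s v :=
        add_le_add (add_le_add_right h2 _) h2
    _ = 3 * wdist H wt s v := by ring
end

section
/- Let G = (V,E) be a finite simple undirected graph with positive edge weights and unique shortest paths, let s, v, x, y be vertices with d_G(v,x) ≤ d_G(s,v), d_G(x,y) ≤ 2 · d_G(s,v), and d_G(y,s) ≤ 4 · d_G(s,v), and let f ∈ E be an edge such that s and v are connected in G − f, f lies on π(s,v), f lies on π(v,x), f lies on π(x,y), and f does not lie on π(y,s). Then d_{G−f}(v,x) + d_{G−f}(x,y) + d_{G−f}(y,s) ≤ 13 · d_{G−f}(s,v). (Case 7 in the proof of Lemma 4.1.) -/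
open scoped ENNReal

variable {V : Type*}

namespace Aux
open SimpleGraph
variable {G : SimpleGraph V} {wt : Sym2 V → NNReal} {u v w a : V}

lemma walkWeight_nil : walkWeight wt (Walk.nil : G.Walk u u) = 0 := by simp [walkWeight]

lemma walkWeight_cons (h : G.Adj u v) (p : G.Walk v w) :
    walkWeight wt (Walk.cons h p) = (wt s(u,v) : ℝ≥0∞) + walkWeight wt p := by
  simp [walkWeight]

lemma walkWeight_append (p : G.Walk u v) (q : G.Walk v w) :
    walkWeight wt (p.append q) = walkWeight wt p + walkWeight wt q := by
  simp [walkWeight, Walk.edges_append]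

lemma walkWeight_reverse (p : G.Walk u v) :
    walkWeight wt p.reverse = walkWeight wt p := by
  simp [walkWeight, Walk.edges_reverse, List.sum_reverse]

lemma walkWeight_ne_top (p : G.Walk u v) : walkWeight wt p ≠ ⊤ := by
  induction p with
  | nil => simp [walkWeight]
  | cons h p ih => rw [walkWeight_cons]; exact ENNReal.add_ne_top.2 ⟨ENNReal.coe_ne_top, ih⟩

lemma wdist_le (p : G.Walk u v) : wdist G wt u v ≤ walkWeight wt p := iInf_le _ p

lemma wdist_comm : wdist G wt u v = wdist G wt v u := by
  refine le_antisymm ?_ ?_ <;>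
  · refine le_iInf fun p => ?_
    exact iInf_le_of_le p.reverse (walkWeight_reverse p).le

lemma wdist_triangle : wdist G wt u w ≤ wdist G wt u v + wdist G wt v w := by
  have h : wdist G wt u v + wdist G wt v w =
      ⨅ (p : G.Walk u v), ⨅ (q : G.Walk v w), (walkWeight wt p + walkWeight wt q) := by
    rw [wdist, wdist, ENNReal.iInf_add]
    exact iInf_congr fun p => ENNReal.add_iInf
  rw [h]
  exact le_iInf fun p => le_iInf fun q =>
    iInf_le_of_le (p.append q) (walkWeight_append p q).le

lemma wdist_le_wdist_deleteEdges (t : Set (Sym2 V)) :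
    wdist G wt u v ≤ wdist (G.deleteEdges t) wt u v := by
  refine le_iInf fun p => ?_
  refine iInf_le_of_le (p.transfer G (fun e he => ?_)) ?_
  · exact SimpleGraph.edgeSet_mono (SimpleGraph.deleteEdges_le _) (p.edges_subset_edgeSet he)
  · simp [walkWeight, Walk.edges_transfer]

lemma wdist_deleteEdges_le {t : Set (Sym2 V)} (p : G.Walk u v) (hp : ∀ e ∈ p.edges, e ∉ t) :
    wdist (G.deleteEdges t) wt u v ≤ walkWeight wt p := by
  refine iInf_le_of_le (p.toDeleteEdges t hp) ?_
  simp [walkWeight, Walk.toDeleteEdges, Walk.edges_transfer]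


lemma exists_decomp {f : Sym2 V} (p : G.Walk u v) (hf : f ∈ p.edges) :
    ∃ (a b : V) (hab : G.Adj a b), s(a,b) = f ∧
      ∃ (p₁ : G.Walk u a) (p₂ : G.Walk b v),
        f ∉ p₁.edges ∧
        walkWeight wt p = walkWeight wt p₁ + wt f + walkWeight wt p₂ := by
  induction p with
  | nil => simp at hf
  | @cons u u' v h q ih =>
    rw [Walk.edges_cons, List.mem_cons] at hf
    by_cases he : f = s(u, u')
    · subst he
      refine ⟨u, u', h, rfl, Walk.nil, q, by simp, ?_⟩
      rw [walkWeight_cons, walkWeight_nil]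
      ring
    · have hf' : f ∈ q.edges := hf.resolve_left he
      obtain ⟨a, b, hab, hfab, p₁, p₂, hnp₁, hw⟩ := ih hf'
      refine ⟨a, b, hab, hfab, Walk.cons h p₁, p₂, ?_, ?_⟩
      · rw [Walk.edges_cons, List.mem_cons]
        rintro (h1 | h1)
        · exact he h1
        · exact hnp₁ h1
      · rw [walkWeight_cons, walkWeight_cons, hw]
        ring

lemma exists_decomp' {f : Sym2 V} (p : G.Walk u v) (hf : f ∈ p.edges) :
    ∃ (a b : V) (hab : G.Adj a b), s(a,b) = f ∧
      ∃ (p₁ : G.Walk u a) (p₂ : G.Walk b v),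
        f ∉ p₂.edges ∧
        walkWeight wt p = walkWeight wt p₁ + wt f + walkWeight wt p₂ := by
  have hf' : f ∈ p.reverse.edges := by rwa [Walk.edges_reverse, List.mem_reverse]
  obtain ⟨a, b, hab, hfab, p₁, p₂, hnp₁, hw⟩ := exists_decomp p.reverse hf'
  refine ⟨b, a, hab.symm, (Sym2.eq_swap).trans hfab, p₂.reverse, p₁.reverse, ?_, ?_⟩
  · rwa [Walk.edges_reverse, List.mem_reverse]
  · rw [walkWeight_reverse, walkWeight_reverse, ← walkWeight_reverse p, hw]
    ring

lemma prefix_shortest (p₁ : G.Walk u a) (p₂ : G.Walk a v)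
    (h : walkWeight wt p₁ + walkWeight wt p₂ ≤ wdist G wt u v) :
    walkWeight wt p₁ = wdist G wt u a := by
  refine le_antisymm ?_ (wdist_le p₁)
  by_contra hlt
  push_neg at hlt
  rw [wdist] at hlt
  obtain ⟨q, hq⟩ := iInf_lt_iff.mp hlt
  have h1 : wdist G wt u v ≤ walkWeight wt q + walkWeight wt p₂ := by
    rw [← walkWeight_append]; exact wdist_le _
  have h2 : walkWeight wt q + walkWeight wt p₂ < walkWeight wt p₁ + walkWeight wt p₂ :=
    ENNReal.add_lt_add_right (walkWeight_ne_top _) hq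
  exact absurd (lt_of_le_of_lt (h.trans h1) h2) (by simp)

lemma suffix_shortest (p₁ : G.Walk u a) (p₂ : G.Walk a v)
    (h : walkWeight wt p₁ + walkWeight wt p₂ ≤ wdist G wt u v) :
    walkWeight wt p₂ = wdist G wt a v := by
  rw [← walkWeight_reverse, wdist_comm]
  refine prefix_shortest p₂.reverse p₁.reverse ?_
  rw [walkWeight_reverse, walkWeight_reverse, ← wdist_comm, add_comm]
  exact h

end Aux

theorem stmt17 [Fintype V] [DecidableEq V] (G : SimpleGraph V) (wt : Sym2 V → NNReal)
    (hwt : ∀ e ∈ G.edgeSet, 0 < wt e)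
    (huniq : HasUniqueShortestPaths G wt)
    (s v x y : V)
    (hvx : wdist G wt v x ≤ wdist G wt s v)
    (hxy : wdist G wt x y ≤ 2 * wdist G wt s v)
    (hys : wdist G wt y s ≤ 4 * wdist G wt s v)
    (f : Sym2 V) (hf : f ∈ G.edgeSet)
    (hconn : (G.deleteEdges {f}).Reachable s v)
    (qsv : G.Walk s v) (hqsv : walkWeight wt qsv = wdist G wt s v)
    (qvx : G.Walk v x) (hqvx : walkWeight wt qvx = wdist G wt v x)
    (qxy : G.Walk x y) (hqxy : walkWeight wt qxy = wdist G wt x y)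
    (qys : G.Walk y s) (hqys : walkWeight wt qys = wdist G wt y s)
    (hf1 : f ∈ qsv.edges) (hf2 : f ∈ qvx.edges)
    (hf3 : f ∈ qxy.edges) (hf4 : f ∉ qys.edges) :
    wdist (G.deleteEdges {f}) wt v x + wdist (G.deleteEdges {f}) wt x y +
        wdist (G.deleteEdges {f}) wt y s ≤
      13 * wdist (G.deleteEdges {f}) wt s v := by
  classical
  have key : ∀ (u' v' : V) (p q : G.Walk u' v'), walkWeight wt p = wdist G wt u' v' →
      walkWeight wt q = wdist G wt u' v' → p = q := by
    intro u' v' p q hp hq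
    obtain ⟨r, _, hr⟩ := huniq u' v' ⟨p⟩
    rw [hr p hp, hr q hq]
  obtain ⟨a₁, b₁, hab₁, hfab₁, S₁, S₂, hS₁f, hSw⟩ := Aux.exists_decomp qsv hf1
  obtain ⟨a₂, b₂, hab₂, hfab₂, T₁, T₂, hT₂f, hTw⟩ := Aux.exists_decomp' qsv hf1
  obtain ⟨c, d, habc, hfcd, B₁, B₂, hB₂f, hBw⟩ := Aux.exists_decomp' qvx hf2
  -- S₁ is the (f-free) shortest walk from s to a₁
  have hS1w : walkWeight wt S₁ = wdist G wt s a₁ := by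
    refine Aux.prefix_shortest S₁ (SimpleGraph.Walk.cons hab₁ S₂) (le_of_eq ?_)
    rw [Aux.walkWeight_cons, hfab₁, ← hqsv, hSw]; ring
  -- the walk from v to x, assuming d = a₁, gives f-free shortest info later
  have hda : d = a₁ := by
    rcases Sym2.eq_iff.mp (hfcd.trans hfab₁.symm) with ⟨hc, hd⟩ | ⟨hc, hd⟩
    swap
    · exact hd
    exfalso
    subst hc hd
    rcases Sym2.eq_iff.mp (hfab₂.trans hfab₁.symm) with ⟨ha, hb⟩ | ⟨ha, hb⟩
    · -- a₂ = a₁, b₂ = b₁ : contradiction at v with two shortest walks v → b₁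
      subst ha hb
      have hT2w : walkWeight wt T₂ = wdist G wt b₂ v := by
        refine Aux.suffix_shortest (T₁.append (SimpleGraph.Walk.cons hab₂ SimpleGraph.Walk.nil))
          T₂ (le_of_eq ?_)
        rw [Aux.walkWeight_append, Aux.walkWeight_cons, Aux.walkWeight_nil, hfab₂, ← hqsv, hTw]
        ring
      have hrev : walkWeight wt T₂.reverse = wdist G wt v b₂ := by
        rw [Aux.walkWeight_reverse, hT2w, Aux.wdist_comm]
      have hPw : walkWeight wt (B₁.append (SimpleGraph.Walk.cons hab₂ SimpleGraph.Walk.nil)) =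
          wdist G wt v b₂ := by
        refine Aux.prefix_shortest _ B₂ (le_of_eq ?_)
        rw [Aux.walkWeight_append, Aux.walkWeight_cons, Aux.walkWeight_nil, hfab₂, ← hqvx, hBw]
        ring
      have heq := key v b₂ _ _ hPw hrev
      have hfin : f ∈ (B₁.append (SimpleGraph.Walk.cons hab₂ SimpleGraph.Walk.nil)).edges := by
        rw [SimpleGraph.Walk.edges_append, List.mem_append, SimpleGraph.Walk.edges_cons]
        exact Or.inr (by simp [hfab₂])
      rw [heq] at hfin
      rw [SimpleGraph.Walk.edges_reverse, List.mem_reverse] at hfin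
      exact hT₂f hfin
    · -- a₂ = b₁, b₂ = a₁ : contradiction at s with two shortest walks s → a₁
      subst ha hb
      have hQw : walkWeight wt (T₁.append (SimpleGraph.Walk.cons hab₂ SimpleGraph.Walk.nil)) =
          wdist G wt s b₂ := by
        refine Aux.prefix_shortest _ T₂ (le_of_eq ?_)
        rw [Aux.walkWeight_append, Aux.walkWeight_cons, Aux.walkWeight_nil, hfab₂, ← hqsv, hTw]
        ring
      have heq := key s b₂ _ _ hQw hS1w
      have hfin : f ∈ (T₁.append (SimpleGraph.Walk.cons hab₂ SimpleGraph.Walk.nil)).edges := by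
        rw [SimpleGraph.Walk.edges_append, List.mem_append, SimpleGraph.Walk.edges_cons]
        exact Or.inr (by simp [hfab₂])
      rw [heq] at hfin
      exact hS₁f hfin
  subst hda
  -- now the three f-free pieces
  have hfree : ∀ {u' v' : V} (p : G.Walk u' v'), f ∉ p.edges → ∀ e ∈ p.edges, e ∉ ({f} : Set (Sym2 V)) := by
    intro u' v' p hp e he hme
    rw [Set.mem_singleton_iff] at hme
    exact hp (hme ▸ he)
  have h_sa : wdist (G.deleteEdges {f}) wt s d ≤ wdist G wt s v := by
    refine (Aux.wdist_deleteEdges_le S₁ (hfree S₁ hS₁f)).trans ?_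
    rw [← hqsv, hSw]
    exact le_self_add.trans le_self_add
  have h_ax : wdist (G.deleteEdges {f}) wt d x ≤ wdist G wt s v := by
    refine ((Aux.wdist_deleteEdges_le B₂ (hfree B₂ hB₂f)).trans ?_).trans hvx
    rw [← hqvx, hBw]
    exact le_add_self
  have h_ys : wdist (G.deleteEdges {f}) wt y s ≤ 4 * wdist G wt s v := by
    refine ((Aux.wdist_deleteEdges_le qys (hfree qys hf4)).trans ?_)
    rw [hqys]; exact hys
  have hDD' : wdist G wt s v ≤ wdist (G.deleteEdges {f}) wt s v :=
    Aux.wdist_le_wdist_deleteEdges {f}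
  set G' := G.deleteEdges {f} with hG'
  set D := wdist G wt s v with hD
  set D' := wdist G' wt s v with hD'
  have t1 : wdist G' wt v x ≤ D' + D + D := by
    calc wdist G' wt v x ≤ wdist G' wt v s + wdist G' wt s x := Aux.wdist_triangle
      _ ≤ wdist G' wt v s + (wdist G' wt s d + wdist G' wt d x) :=
          add_le_add_right Aux.wdist_triangle _
      _ ≤ D' + (D + D) := by
          rw [Aux.wdist_comm (u := v) (v := s)]
          exact add_le_add le_rfl (add_le_add h_sa h_ax)
      _ = D' + D + D := by ring
  have t2 : wdist G' wt x y ≤ D + D + 4 * D := by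
    calc wdist G' wt x y ≤ wdist G' wt x d + wdist G' wt d y := Aux.wdist_triangle
      _ ≤ wdist G' wt x d + (wdist G' wt d s + wdist G' wt s y) :=
          add_le_add_right Aux.wdist_triangle _
      _ ≤ D + (D + 4 * D) := by
          rw [Aux.wdist_comm (u := x) (v := d), Aux.wdist_comm (u := d) (v := s),
            Aux.wdist_comm (u := s) (v := y)]
          exact add_le_add h_ax (add_le_add h_sa h_ys)
      _ = D + D + 4 * D := by ring
  calc wdist G' wt v x + wdist G' wt x y + wdist G' wt y s
      ≤ (D' + D + D) + (D + D + 4 * D) + 4 * D := by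
        exact add_le_add (add_le_add t1 t2) h_ys
    _ = D' + 12 * D := by ring
    _ ≤ D' + 12 * D' := by
        exact add_le_add le_rfl (mul_le_mul_right hDD' _)
    _ = 13 * D' := by ring
end
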